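/- For a finite set S with |S| = s ≥ 1 and a non-negative integer t, there exists a non-Bondy system 𝒜 on S with |𝒜| = t if and only if s + 1 ≤ t ≤ 2^s. -/

import Mathlib

def IsBondy {α : Type*} [DecidableEq α] (S : Finset α) (𝒜 : Finset (Finset α)) : Prop :=
  ∃ a ∈ S, ∀ A ∈ 𝒜, insert a A ∈ 𝒜 → a ∈ A

private lemma nonBondy_lower {α : Type*} [DecidableEq α] (S : Finset α)
    (𝒜 : Finset (Finset α)) (hsub : ∀ A ∈ 𝒜, A ⊆ S) (h1 : 1 ≤ S.card)
    (hnb : ¬ IsBondy S 𝒜) : S.card + 1 ≤ 𝒜.card := by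
  induction S using Finset.strongInduction generalizing 𝒜 with
  | _ S IH =>
    rw [IsBondy] at hnb
    push_neg at hnb
    obtain ⟨a, ha⟩ := Finset.card_pos.mp h1
    obtain ⟨A, hA, hAi, haA⟩ := hnb a ha
    rcases eq_or_lt_of_le h1 with hcard | hcard
    · -- S.card = 1
      have h2 : 1 < 𝒜.card := Finset.one_lt_card.mpr
        ⟨A, hA, insert a A, hAi, fun h => haA (h ▸ Finset.mem_insert_self a A)⟩
      omega
    · -- S.card ≥ 2
      set S' := S.erase a with hS'
      set 𝒜' := 𝒜.image (fun B => B.erase a) with h𝒜'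
      have hS'card : S'.card = S.card - 1 := Finset.card_erase_of_mem ha
      have hsub' : ∀ B ∈ 𝒜', B ⊆ S' := by
        intro B hB
        simp only [h𝒜', Finset.mem_image] at hB
        obtain ⟨C, hC, rfl⟩ := hB
        exact Finset.erase_subset_erase a (hsub C hC)
      have hnb' : ¬ IsBondy S' 𝒜' := by
        rw [IsBondy]
        push_neg
        intro b hb
        have hbS : b ∈ S := Finset.mem_of_mem_erase hb
        have hba : b ≠ a := Finset.ne_of_mem_erase hb
        obtain ⟨B, hB, hBi, hbB⟩ := hnb b hbS
        refine ⟨B.erase a, Finset.mem_image_of_mem _ hB, ?_, fun h => hbB (Finset.mem_of_mem_erase h)⟩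
        rw [(Finset.erase_insert_of_ne hba).symm]
        exact Finset.mem_image_of_mem _ hBi
      have hIH : S'.card + 1 ≤ 𝒜'.card :=
        IH S' (Finset.erase_ssubset ha) 𝒜' hsub' (by omega) hnb'
      have hAne : A ≠ insert a A := fun h => haA (h ▸ Finset.mem_insert_self a A)
      have hstep : 𝒜'.card ≤ 𝒜.card - 1 := by
        have hsubimg : 𝒜' ⊆ (𝒜.erase (insert a A)).image (fun B => B.erase a) := by
          intro B hB
          simp only [h𝒜', Finset.mem_image] at hB ⊢
          obtain ⟨C, hC, rfl⟩ := hB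
          by_cases hCA : C = insert a A
          · refine ⟨A, Finset.mem_erase.mpr ⟨hAne, hA⟩, ?_⟩
            rw [hCA, Finset.erase_insert haA, Finset.erase_eq_of_notMem haA]
          · exact ⟨C, Finset.mem_erase.mpr ⟨hCA, hC⟩, rfl⟩
        calc 𝒜'.card ≤ ((𝒜.erase (insert a A)).image (fun B => B.erase a)).card :=
              Finset.card_le_card hsubimg
          _ ≤ (𝒜.erase (insert a A)).card := Finset.card_image_le
          _ = 𝒜.card - 1 := Finset.card_erase_of_mem hAi
      have : 1 ≤ 𝒜.card := Finset.card_pos.mpr ⟨A, hA⟩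
      omega

theorem nonBondy_card_iff {α : Type*} [DecidableEq α] (S : Finset α)
    (hs : 1 ≤ S.card) (t : ℕ) :
    (∃ 𝒜 : Finset (Finset α), (∀ A ∈ 𝒜, A ⊆ S) ∧ ¬ IsBondy S 𝒜 ∧ 𝒜.card = t) ↔
      S.card + 1 ≤ t ∧ t ≤ 2 ^ S.card := by
  constructor
  · rintro ⟨𝒜, hsub, hnb, rfl⟩
    refine ⟨nonBondy_lower S 𝒜 hsub hs hnb, ?_⟩
    have hpow : 𝒜 ⊆ S.powerset := fun A hA => Finset.mem_powerset.mpr (hsub A hA)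
    calc 𝒜.card ≤ S.powerset.card := Finset.card_le_card hpow
      _ = 2 ^ S.card := Finset.card_powerset S
  · rintro ⟨hlo, hhi⟩
    set L := S.toList with hL
    have hLnd : L.Nodup := S.nodup_toList
    have hLlen : L.length = S.card := S.length_toList
    set 𝒞 := (Finset.range (S.card + 1)).image (fun i => (L.take i).toFinset) with h𝒞
    have hcardtake : ∀ i, i ≤ S.card → (L.take i).toFinset.card = i := by
      intro i hi
      rw [List.toFinset_card_of_nodup (hLnd.sublist (List.take_sublist i L))]
      simp [hLlen, hi]
    have h𝒞card : 𝒞.card = S.card + 1 := by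
      rw [h𝒞, Finset.card_image_of_injOn, Finset.card_range]
      intro i hi j hj hij
      simp only [Finset.coe_range, Set.mem_Iio] at hi hj
      have hc := congrArg Finset.card hij
      simp only at hc
      rwa [hcardtake i (by omega), hcardtake j (by omega)] at hc
    have h𝒞pow : 𝒞 ⊆ S.powerset := by
      intro B hB
      simp only [h𝒞, Finset.mem_image] at hB
      obtain ⟨i, _, rfl⟩ := hB
      rw [Finset.mem_powerset]
      intro x hx
      rw [List.mem_toFinset] at hx
      exact Finset.mem_toList.mp (List.mem_of_mem_take hx)
    obtain ⟨𝒜, h𝒞𝒜, h𝒜pow, h𝒜card⟩ :=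
      Finset.exists_subsuperset_card_eq h𝒞pow (h𝒞card ▸ hlo) (by rwa [Finset.card_powerset])
    refine ⟨𝒜, fun A hA => Finset.mem_powerset.mp (h𝒜pow hA), ?_, h𝒜card⟩
    rw [IsBondy]
    push_neg
    intro a ha
    obtain ⟨i, hi, hai⟩ := List.mem_iff_getElem.mp (Finset.mem_toList.mpr ha)
    have hi' : i < S.card := hLlen ▸ hi
    refine ⟨(L.take i).toFinset, h𝒞𝒜 ?_, ?_, ?_⟩
    · exact Finset.mem_image_of_mem _ (Finset.mem_range.mpr (by omega))
    · have hins : insert a (L.take i).toFinset = (L.take (i + 1)).toFinset := by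
        rw [← List.take_concat_get' L i hi]
        ext x
        simp only [List.toFinset_append, Finset.mem_insert, Finset.mem_union, List.mem_toFinset, List.mem_singleton]
        have hLi : L[i] = a := hai
        rw [hLi]
        exact or_comm
      rw [hins]
      exact h𝒞𝒜 (Finset.mem_image_of_mem _ (Finset.mem_range.mpr (by omega)))
    · intro hmem
      rw [List.mem_toFinset] at hmem
      obtain ⟨j, hj, haj⟩ := List.mem_iff_getElem.mp hmem
      have hjlen : j < i := by
        have := hj
        simp [List.length_take] at this
        omega
      rw [List.getElem_take] at haj
      have hij : i = j := (List.Nodup.getElem_inj_iff hLnd).mp (hai.trans haj.symm)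
      omega
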